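/- Let n > 2 and let k ≥ 1 satisfy k+1 < n. Then the model M_n^k is k-bisimilar, but not (k+1)-bisimilar, to the model N_n^{k-1}. -/

import Mathlib

/-! # Common framework: superintuitionistic logics, Kripke frames and models -/

/-! ## Intuitionistic propositional formulas -/

inductive Form : Type
  | var : ℕ → Form
  | bot : Form
  | top : Form
  | and : Form → Form → Form
  | or  : Form → Form → Form
  | imp : Form → Form → Form
deriving DecidableEq

namespace Form

/-- Implication depth of a formula. -/
def depth : Form → ℕ
  | var _ => 0
  | bot => 0
  | top => 0
  | and φ ψ => max φ.depth ψ.depth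
  | or φ ψ => max φ.depth ψ.depth
  | imp φ ψ => max φ.depth ψ.depth + 1

/-- All propositional variables of the formula are among `p_0, …, p_{m-1}`. -/
def varsLt (m : ℕ) : Form → Prop
  | var p => p < m
  | bot => True
  | top => True
  | and φ ψ => φ.varsLt m ∧ ψ.varsLt m
  | or φ ψ => φ.varsLt m ∧ ψ.varsLt m
  | imp φ ψ => φ.varsLt m ∧ ψ.varsLt m

/-- Uniform substitution. -/
def subst (σ : ℕ → Form) : Form → Form
  | var p => σ p
  | bot => bot
  | top => top
  | and φ ψ => and (φ.subst σ) (ψ.subst σ)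
  | or φ ψ => or (φ.subst σ) (ψ.subst σ)
  | imp φ ψ => imp (φ.subst σ) (ψ.subst σ)

/-- Biconditional. -/
def iff (φ ψ : Form) : Form := and (imp φ ψ) (imp ψ φ)

/-- Negation. -/
def neg (φ : Form) : Form := imp φ bot

end Form

/-! ## IPC and superintuitionistic logics -/

/-- A Hilbert-style axiomatization of intuitionistic propositional logic. -/
inductive IPC : Form → Prop
  | ax1 (φ ψ : Form) : IPC (.imp φ (.imp ψ φ))
  | ax2 (φ ψ χ : Form) :
      IPC (.imp (.imp φ (.imp ψ χ)) (.imp (.imp φ ψ) (.imp φ χ)))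
  | andE1 (φ ψ : Form) : IPC (.imp (.and φ ψ) φ)
  | andE2 (φ ψ : Form) : IPC (.imp (.and φ ψ) ψ)
  | andI (φ ψ : Form) : IPC (.imp φ (.imp ψ (.and φ ψ)))
  | orI1 (φ ψ : Form) : IPC (.imp φ (.or φ ψ))
  | orI2 (φ ψ : Form) : IPC (.imp ψ (.or φ ψ))
  | orE (φ ψ χ : Form) :
      IPC (.imp (.imp φ χ) (.imp (.imp ψ χ) (.imp (.or φ ψ) χ)))
  | botE (φ : Form) : IPC (.imp .bot φ)
  | topI : IPC .top
  | mp (φ ψ : Form) : IPC (.imp φ ψ) → IPC φ → IPC ψ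

/-- The set of theorems of IPC. -/
def IPCSet : Set Form := {φ | IPC φ}

/-- A superintuitionistic logic: a set of formulas containing all theorems of
IPC, closed under modus ponens and uniform substitution. -/
def IsSILogic (L : Set Form) : Prop :=
  IPCSet ⊆ L ∧
  (∀ φ ψ : Form, Form.imp φ ψ ∈ L → φ ∈ L → ψ ∈ L) ∧
  (∀ (φ : Form) (σ : ℕ → Form), φ ∈ L → φ.subst σ ∈ L)

/-- `oplus L Γ` is the least superintuitionistic logic containing `L` and `Γ`
(written `L ⊕ Γ`). -/
def oplus (L Γ : Set Form) : Set Form :=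
  ⋂₀ {M : Set Form | IsSILogic M ∧ L ⊆ M ∧ Γ ⊆ M}

/-- A logic is `n`-uniform if every formula is provably equivalent in it to a
formula of implication depth at most `n`. -/
def Uniform (L : Set Form) (n : ℕ) : Prop :=
  ∀ φ : Form, ∃ ψ : Form, ψ.depth ≤ n ∧ Form.iff φ ψ ∈ L

/-- A logic is locally tabular if over each finite tuple of variables there are
only finitely many formulas up to provable equivalence. -/
def LocallyTabular (L : Set Form) : Prop :=
  ∀ m : ℕ, ∃ Φ : Finset Form, ∀ φ : Form, φ.varsLt m → ∃ ψ ∈ Φ, Form.iff φ ψ ∈ L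

/-! ## Kripke frames (posets) -/

structure Frame : Type 1 where
  W : Type
  le : W → W → Prop
  refl : ∀ x, le x x
  trans : ∀ x y z, le x y → le y z → le x z
  antisymm : ∀ x y, le x y → le y x → x = y

namespace Frame

def lt (F : Frame) (a b : F.W) : Prop := F.le a b ∧ a ≠ b

/-- A valuation is persistent if it is preserved upwards. -/
def Persistent (F : Frame) (V : ℕ → F.W → Prop) : Prop :=
  ∀ p a b, F.le a b → V p a → V p b

/-- Kripke forcing. -/
def force (F : Frame) (V : ℕ → F.W → Prop) : Form → F.W → Prop
  | .var p, w => V p w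
  | .bot, _ => False
  | .top, _ => True
  | .and φ ψ, w => F.force V φ w ∧ F.force V ψ w
  | .or φ ψ, w => F.force V φ w ∨ F.force V ψ w
  | .imp φ ψ, w => ∀ v, F.le w v → F.force V φ v → F.force V ψ v

/-- `F ⊩ φ`. -/
def Valid (F : Frame) (φ : Form) : Prop :=
  ∀ V : ℕ → F.W → Prop, F.Persistent V → ∀ w : F.W, F.force V φ w

def Rooted (F : Frame) : Prop := ∃ r, ∀ w, F.le r w

/-- The subposet on a subset of the carrier. -/
def restrict (F : Frame) (s : Set F.W) : Frame where
  W := s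
  le a b := F.le a.1 b.1
  refl a := F.refl a.1
  trans a b c h1 h2 := F.trans a.1 b.1 c.1 h1 h2
  antisymm a b h1 h2 := Subtype.ext (F.antisymm a.1 b.1 h1 h2)

/-- The rooted upset `↑z`. -/
def up (F : Frame) (z : F.W) : Frame := F.restrict {w | F.le z w}

/-- There is a chain of `d` elements in `↑w` starting at `w`. -/
def hasChainUp (F : Frame) (w : F.W) (d : ℕ) : Prop :=
  ∃ f : Fin d → F.W, (∀ i : Fin d, (i : ℕ) = 0 → f i = w) ∧
    (∀ i j : Fin d, (i : ℕ) < (j : ℕ) → F.lt (f i) (f j))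

/-- The depth of `w` is `d`: the longest chain in `↑w` has exactly `d` elements. -/
def depthEq (F : Frame) (w : F.W) (d : ℕ) : Prop :=
  F.hasChainUp w d ∧ ¬ F.hasChainUp w (d + 1)

/-- The covering relation of the poset. -/
def covBy (F : Frame) (a b : F.W) : Prop :=
  F.lt a b ∧ ∀ c, F.lt a c → F.lt c b → False

end Frame

/-- A p-morphism of posets. -/
def IsPMorphism (P Q : Frame) (f : P.W → Q.W) : Prop :=
  (∀ a b, P.le a b → Q.le (f a) (f b)) ∧
  (∀ a b, Q.le (f a) b → ∃ a', P.le a a' ∧ f a' = b)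

/-- `Q` is a p-morphic image of `P`. -/
def PMorphicImage (P Q : Frame) : Prop :=
  ∃ f : P.W → Q.W, IsPMorphism P Q f ∧ Function.Surjective f

/-- Order isomorphism of posets. -/
def FrameIso (P Q : Frame) : Prop :=
  ∃ f : P.W → Q.W, Function.Bijective f ∧ ∀ a b, P.le a b ↔ Q.le (f a) (f b)

/-- The logic of a class of posets. -/
def LogK (K : Set Frame) : Set Form := {φ | ∀ F ∈ K, F.Valid φ}

/-- The logic of a single poset. -/
def FrameLog (F : Frame) : Set Form := {φ | F.Valid φ}

/-- `J` is a Yankov formula for the finite rooted poset `Q`: a finite poset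
refutes `J` exactly when `Q` is isomorphic to a rooted upset of one of its
p-morphic images. -/
def IsYankov (J : Form) (Q : Frame) : Prop :=
  ∀ P : Frame, Finite P.W →
    (¬ P.Valid J ↔ ∃ G : Frame, PMorphicImage P G ∧ ∃ z : G.W, FrameIso (G.up z) Q)

/-! ## Rooted Kripke models over `n` propositional variables -/

structure Model (n : ℕ) : Type 1 where
  W : Type
  le : W → W → Prop
  refl : ∀ x, le x x
  trans : ∀ x y z, le x y → le y z → le x z
  antisymm : ∀ x y, le x y → le y x → x = y
  root : W
  rooted : ∀ w, le root w
  col : W → Set (Fin n)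
  mono : ∀ a b, le a b → col a ⊆ col b

namespace Model

/-- The underlying poset of a model. -/
def frame {n : ℕ} (M : Model n) : Frame :=
  ⟨M.W, M.le, M.refl, M.trans, M.antisymm⟩

def force {n : ℕ} (M : Model n) : Form → M.W → Prop
  | .var p, w => ∃ h : p < n, (⟨p, h⟩ : Fin n) ∈ M.col w
  | .bot, _ => False
  | .top, _ => True
  | .and φ ψ, w => M.force φ w ∧ M.force ψ w
  | .or φ ψ, w => M.force φ w ∨ M.force ψ w
  | .imp φ ψ, w => ∀ v, M.le w v → M.force φ v → M.force ψ v

/-- Satisfaction at the root of the model. -/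
def Sat {n : ℕ} (M : Model n) (φ : Form) : Prop := M.force φ M.root

/-- (Full) bisimilarity of two rooted models. -/
def Bisim {n : ℕ} (M N : Model n) : Prop :=
  ∃ S : M.W → N.W → Prop,
    S M.root N.root ∧
    (∀ a b, S a b → M.col a = N.col b) ∧
    (∀ a b a', S a b → M.le a a' → ∃ b', N.le b b' ∧ S a' b') ∧
    (∀ a b b', S a b → N.le b b' → ∃ a', M.le a a' ∧ S a' b')

/-- `k`-bisimilarity of the points `x, y`, via a decreasing chain
`S k ⊆ ⋯ ⊆ S 0` of relations. -/
def NBisimAt {n : ℕ} (M N : Model n) (k : ℕ) (x : M.W) (y : N.W) : Prop :=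
  ∃ S : ℕ → M.W → N.W → Prop,
    (∀ j a b, S (j + 1) a b → S j a b) ∧
    S k x y ∧
    (∀ a b, S 0 a b → M.col a = N.col b) ∧
    (∀ j a b a', j < k → S (j + 1) a b → M.le a a' →
        ∃ b', N.le b b' ∧ S j a' b') ∧
    (∀ j a b b', j < k → S (j + 1) a b → N.le b b' →
        ∃ a', M.le a a' ∧ S j a' b')

/-- `k`-bisimilarity of two rooted models. -/
def NBisim {n : ℕ} (M N : Model n) (k : ℕ) : Prop :=
  NBisimAt M N k M.root N.root

/-- The submodel on the rooted upset `↑z`. -/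
def up {n : ℕ} (M : Model n) (z : M.W) : Model n where
  W := {w : M.W // M.le z w}
  le a b := M.le a.1 b.1
  refl a := M.refl a.1
  trans a b c h1 h2 := M.trans a.1 b.1 c.1 h1 h2
  antisymm a b h1 h2 := Subtype.ext (M.antisymm a.1 b.1 h1 h2)
  root := ⟨z, M.refl z⟩
  rooted w := w.2
  col a := M.col a.1
  mono a b h := M.mono a.1 b.1 h

/-- `(M, x) ≤ₖ (N, y)`: there is `z ≥ x` such that `(↑z, z)` is `k`-bisimilar
with `(N, y)`. -/
def LeBisim {n : ℕ} (M N : Model n) (k : ℕ) : Prop :=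
  ∃ z : M.W, M.le M.root z ∧ NBisim (M.up z) N k

/-- Two points of a model are bisimilar. -/
def PointsBisim {n : ℕ} (M : Model n) (a b : M.W) : Prop :=
  ∃ S : M.W → M.W → Prop,
    S a b ∧
    (∀ x y, S x y → M.col x = M.col y) ∧
    (∀ x y x', S x y → M.le x x' → ∃ y', M.le y y' ∧ S x' y') ∧
    (∀ x y y', S x y → M.le y y' → ∃ x', M.le x x' ∧ S x' y')

/-- A model over `n` variables is (`n`-)generated if it contains no two
distinct bisimilar points. -/
def Generated {n : ℕ} (M : Model n) : Prop :=
  ∀ a b : M.W, M.PointsBisim a b → a = b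

/-- Isomorphism of models: a root-preserving, color-preserving order
isomorphism. -/
def Iso {n : ℕ} (M N : Model n) : Prop :=
  ∃ f : M.W → N.W, Function.Bijective f ∧ f M.root = N.root ∧
    (∀ a b, M.le a b ↔ N.le (f a) (f b)) ∧ (∀ a, N.col (f a) = M.col a)

/-- `M` is a model over the class of posets `K`: its underlying poset is a
p-morphic image of a rooted upset of a member of `K`. -/
def InClass {n : ℕ} (K : Set Frame) (M : Model n) : Prop :=
  ∃ F ∈ K, ∃ z : F.W, PMorphicImage (F.up z) M.frame

/-- The model on the rooted upset `↑z` of a frame `F`, with coloring `c`. -/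
def ofFrame (F : Frame) (z : F.W) (n : ℕ) (c : (F.up z).W → Set (Fin n))
    (hc : ∀ a b : (F.up z).W, (F.up z).le a b → c a ⊆ c b) : Model n where
  W := (F.up z).W
  le := (F.up z).le
  refl := (F.up z).refl
  trans := (F.up z).trans
  antisymm := (F.up z).antisymm
  root := ⟨z, F.refl z⟩
  rooted w := w.2
  col := c
  mono := hc

end Model

/-! ## Boolean sums and stacks -/

/-- A (finite rooted) poset is a Boolean sum: it is rooted, covers decrease the
depth by exactly one, and every point of depth `k+1` lies below every point of
depth `k`. -/
def IsBooleanSum (F : Frame) : Prop :=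
  F.Rooted ∧
  (∀ a b da db, F.covBy a b → F.depthEq a da → F.depthEq b db → da = db + 1) ∧
  (∀ a b k, F.depthEq a (k + 1) → F.depthEq b k → F.le a b)

/-- `F` contains a `k`-stack: `k` consecutive layers (sets of points of equal
depth) each containing at least two points. -/
def HasStack (F : Frame) (k : ℕ) : Prop :=
  ∃ j : ℕ, ∀ i : ℕ, j ≤ i → i < j + k →
    ∃ a b : F.W, a ≠ b ∧ F.depthEq a i ∧ F.depthEq b i

/-! ## The posets Q₁, …, Q₈ -/

def q1le : Fin 4 → Fin 4 → Bool := fun a b =>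
  a = b || a = 0 || (a = 1 && b = 3)
def q2le : Fin 5 → Fin 5 → Bool := fun a b =>
  a = b || a = 0 || (a = 1 && (b = 3 || b = 4)) || (a = 2 && b = 4)
def q3le : Fin 5 → Fin 5 → Bool := fun a b =>
  a = b || a = 0 || (a = 1 && b = 4) || (a = 2 && (b = 3 || b = 4)) ||
    (a = 3 && b = 4)
def q4le : Fin 5 → Fin 5 → Bool := fun a b =>
  a = b || a = 0 || ((a = 1 || a = 2) && (b = 3 || b = 4))
def q5le : Fin 6 → Fin 6 → Bool := fun a b =>
  a = b || a = 0 || b = 5 || ((a = 1 || a = 2) && (b = 3 || b = 4))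
def q6le : Fin 4 → Fin 4 → Bool := fun a b =>
  a = b || a = 0 || b = 3
def q7le : Fin 5 → Fin 5 → Bool := fun a b =>
  a = b || a = 0 || (a = 1 && b = 3) || (a = 2 && b = 4)
def q8le : Fin 4 → Fin 4 → Bool := fun a b =>
  a = b || a = 0

/-- `Q₁`: root `0`; immediate successors `1`, `2`; `2` maximal; `3` the unique
(maximal) immediate successor of `1`. -/
def Q1f : Frame :=
  ⟨Fin 4, fun a b => q1le a b = true, by decide, by decide, by decide⟩
/-- `Q₂`: root `0`; immediate successors `1`, `2`; maximal points `3`, `4`;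
`1 < 3`, `1 < 4`, `2 < 4`, `2 ≮ 3`. -/
def Q2f : Frame :=
  ⟨Fin 5, fun a b => q2le a b = true, by decide, by decide, by decide⟩
/-- `Q₃`: root `0`; immediate successors `1`, `2`; `3` covers `2`; top `4`
with `1 < 4` and `3 < 4`. -/
def Q3f : Frame :=
  ⟨Fin 5, fun a b => q3le a b = true, by decide, by decide, by decide⟩
/-- `Q₄`: root `0`; `1`, `2` cover the root; maximal `3`, `4` above both `1`
and `2`. -/
def Q4f : Frame :=
  ⟨Fin 5, fun a b => q4le a b = true, by decide, by decide, by decide⟩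
/-- `Q₅`: `Q₄` with a greatest element `5` added on top. -/
def Q5f : Frame :=
  ⟨Fin 6, fun a b => q5le a b = true, by decide, by decide, by decide⟩
/-- `Q₆`: the diamond. -/
def Q6f : Frame :=
  ⟨Fin 4, fun a b => q6le a b = true, by decide, by decide, by decide⟩
/-- `Q₇`: root `0`; `1 < 3`, `2 < 4`, and no other strict relations above the
root. -/
def Q7f : Frame :=
  ⟨Fin 5, fun a b => q7le a b = true, by decide, by decide, by decide⟩
/-- `Q₈`: a root with three pairwise incomparable maximal points. -/
def Q8f : Frame :=
  ⟨Fin 4, fun a b => q8le a b = true, by decide, by decide, by decide⟩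

/-! ## Particular logics -/

/-- The one-element poset. -/
def unitFrame : Frame :=
  ⟨PUnit, fun _ _ => True, fun _ => trivial, fun _ _ _ _ _ => trivial,
    fun a b _ _ => Subsingleton.elim a b⟩

/-- The two-element chain. -/
def chain2 : Frame :=
  ⟨Bool, fun a b => a ≤ b, le_refl, fun _ _ _ => le_trans,
    fun _ _ => le_antisymm⟩

/-- Classical propositional logic: the logic of the one-element poset. -/
def CPC : Set Form := FrameLog unitFrame

/-- The logic of the two-element chain. -/
def Sme : Set Form := FrameLog chain2

/-- The weak Peirce law `(q → p) ∨ (((p → q) → p) → p)`. -/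
def wPLax : Form :=
  .or (.imp (.var 1) (.var 0))
    (.imp (.imp (.imp (.var 0) (.var 1)) (.var 0)) (.var 0))

/-- The logic `wPL = IPC ⊕ (q → p) ∨ (((p → q) → p) → p)`. -/
def wPL : Set Form := oplus IPCSet {wPLax}

/-- The bounded-width-2 axiom `⋁_{i≤2} (pᵢ → ⋁_{j≠i} pⱼ)`. -/
def bw2ax : Form :=
  .or (.imp (.var 0) (.or (.var 1) (.var 2)))
    (.or (.imp (.var 1) (.or (.var 0) (.var 2)))
      (.imp (.var 2) (.or (.var 0) (.var 1))))

/-- The axiom `¬p ∨ ¬¬p`. -/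
def kcax : Form := .or (Form.neg (.var 0)) (Form.neg (Form.neg (.var 0)))

/-- The logic `Box = wPL ⊕ bw₂ ⊕ (¬p ∨ ¬¬p)`. -/
def BoxLogic : Set Form := oplus wPL {bw2ax, kcax}

/-- The bounded-depth formulas. -/
def bd : ℕ → Form
  | 0 => .var 0
  | n + 1 => .or (.var (n + 1)) (.imp (.var (n + 1)) (bd n))

/-- The logic `BD_n = IPC ⊕ bd_n`. -/
def BD (n : ℕ) : Set Form := oplus IPCSet {bd n}

/-- A logic is of finite depth if it contains some `BD_n`. -/
def FiniteDepth (L : Set Form) : Prop := ∃ n, BD n ⊆ L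

/-! ## The Rieger–Nishimura ladder -/

/-- Points of the Rieger–Nishimura ladder: `inl k = L_k`, `inr k = R_k`. -/
abbrev RNpt : Type := ℕ ⊕ ℕ

/-- The covering relation of the Rieger–Nishimura ladder (`rnCov a b` means
`a ⋖ b`, i.e. `b` is an immediate successor of `a`). -/
inductive rnCov : RNpt → RNpt → Prop
  | ll (k : ℕ) : rnCov (.inl (k + 1)) (.inl k)
  | rr (k : ℕ) : rnCov (.inr (k + 1)) (.inr k)
  | rl (k : ℕ) : rnCov (.inr (k + 1)) (.inl k)
  | lr (k : ℕ) : rnCov (.inl (k + 2)) (.inr k)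

private def rnIdx : RNpt → ℕ
  | .inl k => 2 * k
  | .inr k => 2 * k + 1

private theorem rnCov_idx {a b : RNpt} (h : rnCov a b) : rnIdx b < rnIdx a := by
  cases h <;> simp [rnIdx] <;> omega

private theorem rnLe_idx {a b : RNpt} (h : Relation.ReflTransGen rnCov a b) :
    rnIdx b ≤ rnIdx a := by
  induction h with
  | refl => exact le_rfl
  | tail _ h₂ ih => exact le_trans (le_of_lt (rnCov_idx h₂)) ih

private theorem rnIdx_inj {a b : RNpt} (h : rnIdx a = rnIdx b) : a = b := by
  rcases a with a | a <;> rcases b with b | b <;> simp [rnIdx] at h ⊢ <;> omega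

/-- The Rieger–Nishimura ladder as a poset: the order is the reflexive
transitive closure of the covering relation. -/
def RN : Frame where
  W := RNpt
  le a b := Relation.ReflTransGen rnCov a b
  refl _ := Relation.ReflTransGen.refl
  trans _ _ _ h1 h2 := h1.trans h2
  antisymm _ _ h1 h2 := rnIdx_inj (le_antisymm (rnLe_idx h2) (rnLe_idx h1))

/-! ## Combs -/

def combLe (n : ℕ) : (Fin n ⊕ Fin n) → (Fin n ⊕ Fin n) → Prop
  | .inl i, .inl j => i ≤ j
  | .inl i, .inr j => i ≤ j
  | .inr i, .inr j => i = j
  | .inr _, .inl _ => False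

/-- The `n`-comb: base points `x_1 ≤ … ≤ x_n` (encoded `inl 0, …, inl (n-1)`)
and maximal teeth `y_1, …, y_n` (encoded `inr 0, …, inr (n-1)`), with
`x_i ≤ y_j ↔ i ≤ j` and the teeth pairwise incomparable. -/
def Comb (n : ℕ) : Frame where
  W := Fin n ⊕ Fin n
  le := combLe n
  refl := by rintro (i | i) <;> simp [combLe]
  trans := by
    rintro (i | i) (j | j) (k | k) h1 h2 <;> simp only [combLe] at * <;>
      first
        | exact le_trans h1 h2
        | exact h2 ▸ h1
  antisymm := by
    rintro (i | i) (j | j) h1 h2 <;> simp only [combLe] at * <;>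
      first
        | exact congrArg Sum.inl (le_antisymm h1 h2)
        | exact congrArg Sum.inr h1

/-- A broken `m`-comb: (isomorphic to) a subposet of the `m`-comb containing
all of the base points `x_1, …, x_m`. -/
def IsBrokenComb (F : Frame) (m : ℕ) : Prop :=
  ∃ s : Set (Comb m).W, (∀ i : Fin m, Sum.inl i ∈ s) ∧
    FrameIso F ((Comb m).restrict s)

/-- The logic of the class of all combs. -/
def LFC : Set Form := LogK {F | ∃ n, F = Comb n}

/-! ## The stacked models `M_n^k` and `N_n^k` -/

/-- Height index of a point: layer `j` (from the top) has index `j`, the root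
(`none`) has index `k+1`. -/
def stackIdx (k : ℕ) : Option (Fin (k + 1) × Bool) → ℕ
  | none => k + 1
  | some (j, _) => j

/-- Size of the color (an initial segment of the variables): the left point
(`false`) of layer `j` gets `1^{n-j}0^j`, the right point (`true`) gets
`1^{n-j-1}0^{j+1}`, and the root gets `1^r0^{n-r}`. -/
def stackColSize (n k r : ℕ) : Option (Fin (k + 1) × Bool) → ℕ
  | none => r
  | some (j, false) => n - j
  | some (j, true) => n - ((j : ℕ) + 1)

private theorem stackColSize_le (n k r : ℕ) (hr : r ≤ n - (k + 1))
    {a b : Option (Fin (k + 1) × Bool)} (h : stackIdx k b < stackIdx k a) :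
    stackColSize n k r a ≤ stackColSize n k r b := by
  rcases a with _ | ⟨j, _ | _⟩ <;> rcases b with _ | ⟨j', _ | _⟩ <;>
    simp only [stackIdx, stackColSize] at * <;> omega

/-- The common shape of `M_n^k` and `N_n^k`, with root color `1^r0^{n-r}`:
`k+1` layers of two points stacked on top of a root. -/
def stackModel (n k r : ℕ) (hr : r ≤ n - (k + 1)) : Model n where
  W := Option (Fin (k + 1) × Bool)
  le a b := a = b ∨ stackIdx k b < stackIdx k a
  refl _ := Or.inl rfl
  trans := by
    rintro a b c (rfl | h1) h2
    · exact h2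
    · rcases h2 with rfl | h2
      · exact Or.inr h1
      · exact Or.inr (h2.trans h1)
  antisymm := by
    rintro a b (rfl | h1) h2
    · rfl
    · rcases h2 with rfl | h2
      · rfl
      · omega
  root := none
  rooted := by
    rintro (_ | ⟨j, s⟩)
    · exact Or.inl rfl
    · exact Or.inr j.isLt
  col a := {i : Fin n | (i : ℕ) < stackColSize n k r a}
  mono := by
    rintro a b (rfl | h) i hi
    · exact hi
    · exact lt_of_lt_of_le hi (stackColSize_le n k r hr h)

/-- The model `M_n^k` (root color `1^{n-k-1}0^{k+1}`). -/
def Mmodel (n k : ℕ) : Model n := stackModel n k (n - (k + 1)) le_rfl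

/-- The model `N_n^k` (root color `1^{n-k-2}0^{k+2}`). -/
def Nmodel (n k : ℕ) : Model n := stackModel n k (n - (k + 2)) (by omega)

/-! ## The frames `S_n` -/

/-- Height index in `S_n`: the top point (`some none`) has index `0`, the two
points of the `j`-th middle layer have index `j+1`, and the root (`none`) has
index `n`. -/
def sIdx (n : ℕ) : Option (Option (Fin (n - 1) × Bool)) → ℕ
  | none => n
  | some none => 0
  | some (some (j, _)) => (j : ℕ) + 1

/-- The frame `S_n` (for `n ≥ 2`): the Boolean sum whose layers from top to
bottom have sizes `1, 2, …, 2, 1` (with `n - 1` layers of size `2`). -/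
def SFrame (n : ℕ) : Frame where
  W := Option (Option (Fin (n - 1) × Bool))
  le a b := a = b ∨ sIdx n b < sIdx n a
  refl _ := Or.inl rfl
  trans := by
    rintro a b c (rfl | h1) h2
    · exact h2
    · rcases h2 with rfl | h2
      · exact Or.inr h1
      · exact Or.inr (h2.trans h1)
  antisymm := by
    rintro a b (rfl | h1) h2
    · rfl
    · rcases h2 with rfl | h2
      · rfl
      · omega

section Statement14Aux

private lemma colSize_inj {n s1 s2 : ℕ} (h1 : s1 ≤ n) (h2 : s2 ≤ n)
    (h : {i : Fin n | (i : ℕ) < s1} = {i : Fin n | (i : ℕ) < s2}) : s1 = s2 := by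
  rcases Nat.lt_trichotomy s1 s2 with hlt | he | hgt
  · have hx : (⟨s1, lt_of_lt_of_le hlt h2⟩ : Fin n) ∈ {i : Fin n | (i : ℕ) < s2} := hlt
    rw [← h] at hx
    simp only [Set.mem_setOf_eq] at hx
    omega
  · exact he
  · have hx : (⟨s2, lt_of_lt_of_le hgt h1⟩ : Fin n) ∈ {i : Fin n | (i : ℕ) < s1} := hgt
    rw [h] at hx
    simp only [Set.mem_setOf_eq] at hx
    omega

/-- The witnessing chain of relations for `k = K+1`-bisimilarity of
`M_n^{K+1}` and `N_n^K`. -/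
private def myS (K j : ℕ) :
    Option (Fin (K + 2) × Bool) → Option (Fin (K + 1) × Bool) → Prop
  | some (i, x), some (i', x') =>
      ((i : ℕ) = (i' : ℕ) ∧ x = x') ∨
      (x = false ∧ x' = true ∧ (i : ℕ) = (i' : ℕ) + 1 ∧ j ≤ (i' : ℕ))
  | some (i, x), none => (i : ℕ) = K + 1 ∧ x = true
  | none, none => j ≤ K + 1
  | none, some _ => False

private lemma myS_mono (K : ℕ) : ∀ j a b, myS K (j + 1) a b → myS K j a b := by
  rintro j (_ | ⟨i, x⟩) (_ | ⟨i', x'⟩) h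
  · have h' : j + 1 ≤ K + 1 := h
    exact (by omega : j ≤ K + 1)
  · exact h.elim
  · exact h
  · have h' : ((i : ℕ) = (i' : ℕ) ∧ x = x') ∨
        (x = false ∧ x' = true ∧ (i : ℕ) = (i' : ℕ) + 1 ∧ j + 1 ≤ (i' : ℕ)) := h
    rcases h' with h | ⟨h1, h2, h3, h4⟩
    · exact Or.inl h
    · exact Or.inr ⟨h1, h2, h3, by omega⟩

private lemma myS_zero (K : ℕ) : ∀ j a b, myS K j a b → myS K 0 a b := by
  intro j
  induction j with
  | zero => exact fun a b h => h
  | succ j ih => exact fun a b h => ih a b (myS_mono K j a b h)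

private lemma Mle_iff (n K : ℕ) (a b : (Mmodel n (K + 1)).W) :
    (Mmodel n (K + 1)).le a b ↔
      (a = b ∨ stackIdx (K + 1) b < stackIdx (K + 1) a) := Iff.rfl

private lemma Nle_iff (n K : ℕ) (a b : (Nmodel n K).W) :
    (Nmodel n K).le a b ↔ (a = b ∨ stackIdx K b < stackIdx K a) := Iff.rfl

private lemma Mcol_eq (n K : ℕ) (a : (Mmodel n (K + 1)).W) :
    (Mmodel n (K + 1)).col a =
      {i : Fin n | (i : ℕ) < stackColSize n (K + 1) (n - (K + 2)) a} := rfl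

private lemma Ncol_eq (n K : ℕ) (a : (Nmodel n K).W) :
    (Nmodel n K).col a =
      {i : Fin n | (i : ℕ) < stackColSize n K (n - (K + 2)) a} := rfl

private lemma stackColSize_le_n (n k r : ℕ) (hr : r ≤ n)
    (a : Option (Fin (k + 1) × Bool)) : stackColSize n k r a ≤ n := by
  rcases a with _ | ⟨j, _ | _⟩ <;> simp [stackColSize] <;> omega

private lemma myS_col (n K : ℕ) : ∀ a b, myS K 0 a b →
    (Mmodel n (K + 1)).col a = (Nmodel n K).col b := by
  rintro (_ | ⟨i, x⟩) (_ | ⟨i', x'⟩) h <;> simp only [myS] at h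
  · refine (Mcol_eq n K _).trans (Eq.trans ?_ (Ncol_eq n K _).symm)
    have : stackColSize n (K + 1) (n - (K + 2)) none =
        stackColSize n K (n - (K + 2)) none := rfl
    rw [this]
  · obtain ⟨h1, rfl⟩ := h
    refine (Mcol_eq n K _).trans (Eq.trans ?_ (Ncol_eq n K _).symm)
    have : stackColSize n (K + 1) (n - (K + 2)) (some (i, true)) =
        stackColSize n K (n - (K + 2)) none := by
      simp [stackColSize]; omega
    rw [this]
  · rcases h with ⟨h1, rfl⟩ | ⟨rfl, rfl, h3, _⟩
    · refine (Mcol_eq n K _).trans (Eq.trans ?_ (Ncol_eq n K _).symm)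
      have : stackColSize n (K + 1) (n - (K + 2)) (some (i, x)) =
          stackColSize n K (n - (K + 2)) (some (i', x)) := by
        cases x <;> simp [stackColSize] <;> omega
      rw [this]
    · refine (Mcol_eq n K _).trans (Eq.trans ?_ (Ncol_eq n K _).symm)
      have : stackColSize n (K + 1) (n - (K + 2)) (some (i, false)) =
          stackColSize n K (n - (K + 2)) (some (i', true)) := by
        simp [stackColSize]; omega
      rw [this]

private lemma myS_forth (n K : ℕ) :
    ∀ j a b a', j < K + 1 → myS K (j + 1) a b → (Mmodel n (K + 1)).le a a' →
      ∃ b', (Nmodel n K).le b b' ∧ myS K j a' b' := by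
  intro j a b a' hj hS hle
  replace hle := (Mle_iff n K _ _).1 hle
  rcases hle with rfl | hlt
  · exact ⟨b, (Nmodel n K).refl b, myS_mono K j a b hS⟩
  rcases a with _ | ⟨i, x⟩
  · -- a = root
    rcases b with _ | ⟨i', x'⟩
    swap
    · exact absurd hS (by simp [myS])
    rcases a' with _ | ⟨i2, x2⟩
    · simp [stackIdx] at hlt
    simp only [stackIdx] at hlt
    by_cases h2 : (i2 : ℕ) ≤ K
    · refine ⟨some (⟨(i2 : ℕ), by omega⟩, x2), ?_, ?_⟩
      · refine (Nle_iff n K _ _).2 ?_; exact Or.inr (by simp [stackIdx]; omega)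
      · exact Or.inl ⟨rfl, rfl⟩
    · have hi2 : (i2 : ℕ) = K + 1 := by have := i2.isLt; omega
      cases x2 with
      | false =>
          refine ⟨some (⟨K, by omega⟩, true), ?_, ?_⟩
          · refine (Nle_iff n K _ _).2 ?_; exact Or.inr (by simp [stackIdx])
          · exact Or.inr ⟨rfl, rfl, by simp [hi2], by simp; omega⟩
      | true =>
          exact ⟨none, (Nmodel n K).refl none, ⟨hi2, rfl⟩⟩
  · rcases b with _ | ⟨i', x'⟩
    · -- b = root, a = (K+1, true)
      obtain ⟨hi, rfl⟩ : (i : ℕ) = K + 1 ∧ x = true := hS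
      rcases a' with _ | ⟨i2, x2⟩
      · simp only [stackIdx] at hlt; omega
      simp only [stackIdx] at hlt
      refine ⟨some (⟨(i2 : ℕ), by omega⟩, x2), ?_, Or.inl ⟨rfl, rfl⟩⟩
      refine (Nle_iff n K _ _).2 ?_; exact Or.inr (by simp [stackIdx]; omega)
    · rcases hS with ⟨h1, rfl⟩ | ⟨rfl, rfl, h3, h4⟩
      · -- identity pair
        rcases a' with _ | ⟨i2, x2⟩
        · simp only [stackIdx] at hlt; omega
        simp only [stackIdx] at hlt
        refine ⟨some (⟨(i2 : ℕ), by omega⟩, x2), ?_, Or.inl ⟨rfl, rfl⟩⟩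
        refine (Nle_iff n K _ _).2 ?_; exact Or.inr (by simp [stackIdx]; omega)
      · -- shifted pair: a = (i'+1, false), b = (i', true), j+1 ≤ i'
        rcases a' with _ | ⟨i2, x2⟩
        · simp only [stackIdx] at hlt; omega
        simp only [stackIdx] at hlt
        by_cases h2 : (i2 : ℕ) < (i' : ℕ)
        · refine ⟨some (⟨(i2 : ℕ), by omega⟩, x2), ?_, Or.inl ⟨rfl, rfl⟩⟩
          refine (Nle_iff n K _ _).2 ?_; exact Or.inr (by simp [stackIdx]; omega)
        · have hi2 : (i2 : ℕ) = (i' : ℕ) := by omega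
          cases x2 with
          | true =>
              refine ⟨some (i', true), (Nmodel n K).refl _, Or.inl ⟨hi2, rfl⟩⟩
          | false =>
              refine ⟨some (⟨(i' : ℕ) - 1, by omega⟩, true), ?_, ?_⟩
              · refine (Nle_iff n K _ _).2 ?_; exact Or.inr (by simp only [stackIdx, Fin.val_mk]; omega)
              · exact Or.inr ⟨rfl, rfl, by simp; omega, by simp; omega⟩

private lemma myS_back (n K : ℕ) :
    ∀ j a b b', j < K + 1 → myS K (j + 1) a b → (Nmodel n K).le b b' →
      ∃ a', (Mmodel n (K + 1)).le a a' ∧ myS K j a' b' := by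
  intro j a b b' hj hS hle
  replace hle := (Nle_iff n K _ _).1 hle
  rcases hle with rfl | hlt
  · exact ⟨a, (Mmodel n (K + 1)).refl a, myS_mono K j a b hS⟩
  rcases a with _ | ⟨i, x⟩
  · rcases b with _ | ⟨i', x'⟩
    swap
    · exact absurd hS (by simp [myS])
    rcases b' with _ | ⟨i2, x2⟩
    · simp [stackIdx] at hlt
    simp only [stackIdx] at hlt
    refine ⟨some (⟨(i2 : ℕ), by omega⟩, x2), ?_, Or.inl ⟨rfl, rfl⟩⟩
    refine (Mle_iff n K _ _).2 ?_; exact Or.inr (by simp only [stackIdx, Fin.val_mk]; omega)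
  · rcases b with _ | ⟨i', x'⟩
    · obtain ⟨hi, rfl⟩ : (i : ℕ) = K + 1 ∧ x = true := hS
      rcases b' with _ | ⟨i2, x2⟩
      · simp only [stackIdx] at hlt; omega
      simp only [stackIdx] at hlt
      refine ⟨some (⟨(i2 : ℕ), by omega⟩, x2), ?_, Or.inl ⟨rfl, rfl⟩⟩
      refine (Mle_iff n K _ _).2 ?_; exact Or.inr (by simp [stackIdx]; omega)
    · rcases hS with ⟨h1, rfl⟩ | ⟨rfl, rfl, h3, h4⟩
      · rcases b' with _ | ⟨i2, x2⟩
        · simp only [stackIdx] at hlt; omega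
        simp only [stackIdx] at hlt
        refine ⟨some (⟨(i2 : ℕ), by omega⟩, x2), ?_, Or.inl ⟨rfl, rfl⟩⟩
        refine (Mle_iff n K _ _).2 ?_; exact Or.inr (by simp [stackIdx]; omega)
      · rcases b' with _ | ⟨i2, x2⟩
        · simp only [stackIdx] at hlt; omega
        simp only [stackIdx] at hlt
        refine ⟨some (⟨(i2 : ℕ), by omega⟩, x2), ?_, Or.inl ⟨rfl, rfl⟩⟩
        refine (Mle_iff n K _ _).2 ?_; exact Or.inr (by simp [stackIdx]; omega)

private lemma statement14_pos (n K : ℕ) :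
    (Mmodel n (K + 1)).NBisim (Nmodel n K) (K + 1) := by
  refine ⟨myS K, myS_mono K, ?_, myS_col n K, myS_forth n K, myS_back n K⟩
  exact le_rfl

private lemma statement14_neg (n K : ℕ) (hn : K + 2 < n) :
    ¬ (Mmodel n (K + 1)).NBisim (Nmodel n K) (K + 2) := by
  rintro ⟨S, hmono, hroot, hcol0, hforth, hback⟩
  have hSzero : ∀ j a b, S j a b → S 0 a b := by
    intro j
    induction j with
    | zero => exact fun a b h => h
    | succ j ih => exact fun a b h => ih a b (hmono j a b h)
  have hcol : ∀ j a b, S j a b →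
      (Mmodel n (K + 1)).col a = (Nmodel n K).col b :=
    fun j a b h => hcol0 a b (hSzero j a b h)
  have hsize : ∀ j (a : (Mmodel n (K + 1)).W) (b : (Nmodel n K).W), S j a b →
      stackColSize n (K + 1) (n - (K + 2)) a =
        stackColSize n K (n - (K + 2)) b := by
    intro j a b h
    have := hcol j a b h
    rw [Mcol_eq, Ncol_eq] at this
    exact colSize_inj (stackColSize_le_n n (K + 1) _ (by omega) a)
      (stackColSize_le_n n K _ (by omega) b) this
  -- main claim by induction on m
  have claim : ∀ m, ∀ hm : m ≤ K,
      ¬ S (m + 1) (some (⟨m + 1, by omega⟩, false)) (some (⟨m, by omega⟩, true)) := by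
    intro m
    induction m with
    | zero =>
        intro _ h
        obtain ⟨b', hle, hS0⟩ := hforth 0 _ _ (some (⟨0, by omega⟩, false))
          (by omega) h (Or.inr (by simp [stackIdx]))
        replace hle := (Nle_iff n K _ _).1 hle
        rcases hle with heq | hlt
        · subst heq
          have := hsize 0 _ _ hS0
          simp [stackColSize] at this
          omega
        · simp [stackIdx] at hlt
    | succ m ih =>
        intro hm h
        obtain ⟨b', hle, hS1⟩ := hforth (m + 1) _ _ (some (⟨m + 1, by omega⟩, false))
          (by omega) h (Or.inr (by simp [stackIdx]))
        replace hle := (Nle_iff n K _ _).1 hle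
        have hsz := hsize (m + 1) _ _ hS1
        rcases b' with _ | ⟨i2, x2⟩
        · rcases hle with heq | hlt
          · exact absurd heq (by simp)
          · simp only [stackIdx] at hlt; omega
        · cases x2 with
          | false =>
              have hi2 : (i2 : ℕ) < m + 1 := by
                rcases hle with heq | hlt
                · exact Bool.noConfusion (congrArg Prod.snd (Option.some.inj heq))
                · exact hlt
              simp only [stackColSize] at hsz
              have := i2.isLt
              omega
          | true =>
              have hi2 : (i2 : ℕ) = m := by
                simp only [stackColSize] at hsz
                have := i2.isLt
                omega
              rw [show i2 = (⟨m, by omega⟩ : Fin (K + 1)) from Fin.ext hi2] at hS1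
              exact ih (by omega) hS1
  -- final contradiction using the root
  have hroot' : S (K + 2) none none := hroot
  obtain ⟨b', hle, hS1⟩ := hforth (K + 1) _ _ (some (⟨K + 1, by omega⟩, false))
    (by omega) hroot' (Or.inr (by simp [stackIdx]))
  have hsz := hsize (K + 1) _ _ hS1
  rcases b' with _ | ⟨i2, x2⟩
  · simp only [stackColSize] at hsz
    omega
  · cases x2 with
    | false =>
        simp only [stackColSize] at hsz
        have := i2.isLt
        omega
    | true =>
        have hi2 : (i2 : ℕ) = K := by
          simp only [stackColSize] at hsz
          have := i2.isLt
          omega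
        rw [show i2 = (⟨K, by omega⟩ : Fin (K + 1)) from Fin.ext hi2] at hS1
        exact claim K le_rfl hS1

end Statement14Aux

/-- Let `n > 2` and `1 ≤ k` with `k + 1 < n`. Then the model
`M_n^k` is `k`-bisimilar, but not `(k+1)`-bisimilar, to the model `N_n^{k-1}`. -/
theorem statement14 (n k : ℕ) (hn : 2 < n) (hk : 1 ≤ k) (hkn : k + 1 < n) :
    (Mmodel n k).NBisim (Nmodel n (k - 1)) k ∧
    ¬ (Mmodel n k).NBisim (Nmodel n (k - 1)) (k + 1) := by
  obtain ⟨K, rfl⟩ : ∃ K, k = K + 1 := ⟨k - 1, by omega⟩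
  simp only [Nat.add_sub_cancel]
  exact ⟨statement14_pos n K, statement14_neg n K (by omega)⟩
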